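/- Let (X, μ) be a probability space, G a topological group with identity e equipped with a metric d, H a complex Hilbert space, n a positive natural number, δ, ε > 0, ξ : Fin n → H a family of vectors, and ρ : G → (H →L[ℂ] H) a map. Assume: (i) for every h ∈ G, if ‖(ρ h)(ξ i) − ξ i‖ < δ for all i, then d(h, e) < ε; (ii) f : X → G is measurable with x ↦ (ρ (f x))(ξ i) measurable for each i, and for every i, ∫ ‖(ρ (f x))(ξ i) − ξ i‖² dμ(x) < δ² · ε / n. Then μ{x ∈ X : d(f x, e) ≥ ε} < ε, and consequently me₁(f, (fun _ => e)) ≤ ε. -/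

import Mathlib

open MeasureTheory
open scoped ENNReal

/-- Gromov's metric `me₁(f, g) = inf {ε > 0 : μ {x : d(f x, g x) > ε} < ε}` on maps `X → G`. -/
noncomputable def me1 {X : Type*} [MeasurableSpace X] (μ : Measure X)
    {G : Type*} [PseudoMetricSpace G] (f g : X → G) : ℝ :=
  sInf {ε : ℝ | 0 < ε ∧ μ {x : X | ε < dist (f x) (g x)} < ENNReal.ofReal ε}

/-- The embedding step: if strong closeness of `ρ h` to the identity on the vectors
`ξ 1, …, ξ n` (within `δ`) forces `d(h, e) < ε`, and `f : X → G` is measurable with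
`∫ ‖ρ (f x) (ξ i) - ξ i‖² dμ < δ² ε / n` for each `i`, then
`μ {x | ε ≤ d(f x, e)} < ε`, and consequently `me₁(f, e) ≤ ε`. -/
theorem measure_dist_ge_lt_and_me1_le
    {X : Type*} [MeasurableSpace X] (μ : Measure X) [IsProbabilityMeasure μ]
    {G : Type*} [Group G] [MetricSpace G] [IsTopologicalGroup G]
    [MeasurableSpace G] [BorelSpace G]
    {H : Type*} [NormedAddCommGroup H] [InnerProductSpace ℂ H] [CompleteSpace H]
    [MeasurableSpace H] [BorelSpace H]
    (n : ℕ) (hn : 0 < n) (δ ε : ℝ) (hδ : 0 < δ) (hε : 0 < ε)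
    (ξ : Fin n → H) (ρ : G → (H →L[ℂ] H))
    (hemb : ∀ h : G, (∀ i, ‖ρ h (ξ i) - ξ i‖ < δ) → dist h 1 < ε)
    (f : X → G) (hf : Measurable f)
    (hmeas : ∀ i, Measurable (fun x => ρ (f x) (ξ i)))
    (hint : ∀ i, Integrable (fun x => ‖ρ (f x) (ξ i) - ξ i‖ ^ 2) μ)
    (hsmall : ∀ i, ∫ x, ‖ρ (f x) (ξ i) - ξ i‖ ^ 2 ∂μ < δ ^ 2 * ε / n) :
    μ {x : X | ε ≤ dist (f x) 1} < ENNReal.ofReal ε ∧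
      me1 μ f (fun _ => (1 : G)) ≤ ε := by
  -- the bad sets
  set S : Fin n → Set X := fun i => {x | δ ≤ ‖ρ (f x) (ξ i) - ξ i‖} with hS
  have hsub : {x : X | ε ≤ dist (f x) 1} ⊆ ⋃ i, S i := by
    intro x hx
    by_contra hxn
    simp only [Set.mem_iUnion, hS, Set.mem_setOf_eq, not_exists, not_le] at hxn
    exact absurd (hemb (f x) hxn) (not_lt.mpr hx)
  have hSlt : ∀ i, μ (S i) < ENNReal.ofReal (ε / n) := by
    intro i
    have hcheb := mul_meas_ge_le_integral_of_nonneg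
      (f := fun x => ‖ρ (f x) (ξ i) - ξ i‖ ^ 2)
      (Filter.Eventually.of_forall fun x => sq_nonneg _) (hint i) (δ ^ 2)
    have hSeq : {x | δ ^ 2 ≤ ‖ρ (f x) (ξ i) - ξ i‖ ^ 2} = S i := by
      ext x
      simp only [hS, Set.mem_setOf_eq]
      constructor
      · intro h
        by_contra hlt
        push_neg at hlt
        exact absurd (pow_lt_pow_left₀ hlt (norm_nonneg _) two_ne_zero) (not_lt.mpr h)
      · intro h
        exact pow_le_pow_left₀ hδ.le h 2
    rw [hSeq] at hcheb
    have hfin : μ (S i) ≠ ⊤ := (measure_lt_top μ _).ne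
    have hlt : δ ^ 2 * (μ (S i)).toReal < δ ^ 2 * (ε / n) := by
      calc δ ^ 2 * (μ (S i)).toReal ≤ _ := hcheb
        _ < δ ^ 2 * ε / n := hsmall i
        _ = δ ^ 2 * (ε / n) := by ring
    have htoReal : (μ (S i)).toReal < ε / n :=
      lt_of_mul_lt_mul_left hlt (sq_nonneg δ)
    exact (ENNReal.lt_ofReal_iff_toReal_lt hfin).mpr htoReal
  have hεn : (0:ℝ) < ε / n := div_pos hε (Nat.cast_pos.mpr hn)
  have hmain : μ {x : X | ε ≤ dist (f x) 1} < ENNReal.ofReal ε := by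
    calc μ {x : X | ε ≤ dist (f x) 1} ≤ μ (⋃ i, S i) := measure_mono hsub
      _ ≤ ∑ i : Fin n, μ (S i) := measure_iUnion_fintype_le μ S
      _ < ∑ _i : Fin n, ENNReal.ofReal (ε / n) :=
          ENNReal.sum_lt_sum_of_nonempty (Finset.univ_nonempty_iff.mpr ⟨⟨0, hn⟩⟩)
            (fun i _ => hSlt i)
      _ = ENNReal.ofReal ε := by
          rw [Finset.sum_const, Finset.card_univ, Fintype.card_fin, nsmul_eq_mul,
            ← ENNReal.ofReal_natCast, ← ENNReal.ofReal_mul (Nat.cast_nonneg n)]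
          congr 1
          field_simp
  refine ⟨hmain, ?_⟩
  apply csInf_le
  · exact ⟨0, fun y hy => hy.1.le⟩
  · refine ⟨hε, lt_of_le_of_lt ?_ hmain⟩
    exact measure_mono fun x (hx : ε < _) => le_of_lt hx
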